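/- The function g(t) = (t²+1)·((t+1)·√(t²+1) − 2√2·t) / ((t²+t+1)·(t−1)²) satisfies √2/2 < g(t) < 1 for all t > 1, tends to √2/2 as t → 1⁺, and tends to 1 as t → +∞; in particular g maps (1, ∞) onto (√2/2, 1). -/

import Mathlib

noncomputable def g (t : ℝ) : ℝ :=
  (t ^ 2 + 1) * ((t + 1) * Real.sqrt (t ^ 2 + 1) - 2 * Real.sqrt 2 * t) /
    ((t ^ 2 + t + 1) * (t - 1) ^ 2)

open Real Set Filter

noncomputable def F (x : ℝ) : ℝ :=
  (1 + x ^ 2) * (1 + 4 * x + x ^ 2) /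
    ((1 + x + x ^ 2) * ((1 + x) * Real.sqrt (1 + x ^ 2) + 2 * Real.sqrt 2 * x))

lemma hr_sq : Real.sqrt 2 ^ 2 = 2 := Real.sq_sqrt (by norm_num)

lemma hr_pos : (0 : ℝ) < Real.sqrt 2 := Real.sqrt_pos.mpr (by norm_num)

lemma hr_gt : (1.41 : ℝ) < Real.sqrt 2 := by
  nlinarith [hr_sq, Real.sqrt_nonneg 2]

lemma hs_sq (t : ℝ) : Real.sqrt (t ^ 2 + 1) ^ 2 = t ^ 2 + 1 :=
  Real.sq_sqrt (by positivity)

lemma hs_pos (t : ℝ) : 0 < Real.sqrt (t ^ 2 + 1) :=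
  Real.sqrt_pos.mpr (by positivity)

lemma hs_gt {t : ℝ} (ht : 0 ≤ t) : t < Real.sqrt (t ^ 2 + 1) :=
  (Real.lt_sqrt ht).mpr (by nlinarith)

lemma W_pos {t : ℝ} (ht : 1 < t) :
    0 < (t + 1) * Real.sqrt (t ^ 2 + 1) + 2 * Real.sqrt 2 * t := by
  have h1 := hs_pos t
  have h2 := hr_pos
  nlinarith

lemma D_pos {t : ℝ} (ht : 1 < t) : 0 < (t ^ 2 + t + 1) * (t - 1) ^ 2 := by
  have h1 : (0 : ℝ) < (t - 1) ^ 2 := pow_pos (by linarith) 2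
  nlinarith

lemma keyNW (t : ℝ) :
    (t ^ 2 + 1) * ((t + 1) * Real.sqrt (t ^ 2 + 1) - 2 * Real.sqrt 2 * t) *
      ((t + 1) * Real.sqrt (t ^ 2 + 1) + 2 * Real.sqrt 2 * t) =
    (t ^ 2 + 1) * (t - 1) ^ 2 * (t ^ 2 + 4 * t + 1) := by
  linear_combination ((t ^ 2 + 1) * (t + 1) ^ 2) * hs_sq t -
    (4 * t ^ 2 * (t ^ 2 + 1)) * hr_sq

lemma bound_upper {t : ℝ} (ht : 1 < t) :
    (t ^ 2 + 1) * (t ^ 2 + 4 * t + 1) <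
      (t ^ 2 + t + 1) * ((t + 1) * Real.sqrt (t ^ 2 + 1) + 2 * Real.sqrt 2 * t) := by
  have hs := hs_gt (by linarith : (0:ℝ) ≤ t)
  have hr := hr_gt
  nlinarith [mul_pos (show (0:ℝ) < t + 1 by linarith) (show (0:ℝ) < Real.sqrt (t^2+1) - t by linarith), mul_pos (show (0:ℝ) < t by linarith) (show (0:ℝ) < Real.sqrt 2 - 1.41 by linarith)]

lemma g_lt_one {t : ℝ} (ht : 1 < t) : g t < 1 := by
  set s := Real.sqrt (t ^ 2 + 1) with hsdef
  set r := Real.sqrt 2 with hrdef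
  have hW := W_pos ht
  have hD := D_pos ht
  have h3 : (0 : ℝ) < (t - 1) ^ 2 := pow_pos (by linarith) 2
  have hN_lt_D : (t ^ 2 + 1) * ((t + 1) * s - 2 * r * t) < (t ^ 2 + t + 1) * (t - 1) ^ 2 := by
    have h2 : (t ^ 2 + 1) * ((t + 1) * s - 2 * r * t) * ((t + 1) * s + 2 * r * t) <
        (t ^ 2 + t + 1) * (t - 1) ^ 2 * ((t + 1) * s + 2 * r * t) := by
      rw [keyNW]
      have hb := bound_upper ht
      nlinarith [mul_lt_mul_of_pos_left hb h3]
    exact lt_of_mul_lt_mul_right h2 hW.le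
  rw [g, div_lt_one hD]
  exact hN_lt_D

lemma Qpos {t : ℝ} (ht : 1 < t) :
    0 < t ^ 6 + 6 * t ^ 5 + 10 * t ^ 4 + 8 * t ^ 3 + 10 * t ^ 2 + 6 * t + 1 := by
  nlinarith [pow_pos (show (0:ℝ) < t by linarith) 6, pow_pos (show (0:ℝ) < t by linarith) 5, pow_pos (show (0:ℝ) < t by linarith) 4, pow_pos (show (0:ℝ) < t by linarith) 3, pow_pos (show (0:ℝ) < t by linarith) 2]

lemma bound_lower {t : ℝ} (ht : 1 < t) :
    Real.sqrt 2 * (t + 1) * (t ^ 2 + t + 1) * Real.sqrt (t ^ 2 + 1) <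
      2 * (t ^ 4 + 2 * t ^ 3 + 2 * t + 1) := by
  have h3 : (0 : ℝ) < (t - 1) ^ 2 := pow_pos (by linarith) 2
  have hsq : (Real.sqrt 2 * (t + 1) * (t ^ 2 + t + 1) * Real.sqrt (t ^ 2 + 1)) ^ 2 <
      (2 * (t ^ 4 + 2 * t ^ 3 + 2 * t + 1)) ^ 2 := by
    have he : (Real.sqrt 2 * (t + 1) * (t ^ 2 + t + 1) * Real.sqrt (t ^ 2 + 1)) ^ 2 =
        2 * (t + 1) ^ 2 * (t ^ 2 + t + 1) ^ 2 * (t ^ 2 + 1) := by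
      simp only [mul_pow, hs_sq, hr_sq]
    rw [he]
    nlinarith [mul_pos h3 (Qpos ht)]
  have hb : (0 : ℝ) ≤ 2 * (t ^ 4 + 2 * t ^ 3 + 2 * t + 1) := by nlinarith
  exact lt_of_pow_lt_pow_left₀ 2 hb hsq

lemma g_gt {t : ℝ} (ht : 1 < t) : Real.sqrt 2 / 2 < g t := by
  set s := Real.sqrt (t ^ 2 + 1) with hsdef
  set r := Real.sqrt 2 with hrdef
  have hW := W_pos ht
  have hD := D_pos ht
  have h3 : (0 : ℝ) < (t - 1) ^ 2 := pow_pos (by linarith) 2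
  have hL := bound_lower ht
  have h2 : r / 2 * ((t ^ 2 + t + 1) * (t - 1) ^ 2) * ((t + 1) * s + 2 * r * t) =
      (t - 1) ^ 2 * (r * (t + 1) * (t ^ 2 + t + 1) * s) / 2 +
        (t - 1) ^ 2 * (2 * t * (t ^ 2 + t + 1)) := by
    linear_combination (t * (t ^ 2 + t + 1) * (t - 1) ^ 2) * hr_sq
  have h4 : r / 2 * ((t ^ 2 + t + 1) * (t - 1) ^ 2) * ((t + 1) * s + 2 * r * t) <
      (t ^ 2 + 1) * ((t + 1) * s - 2 * r * t) * ((t + 1) * s + 2 * r * t) := by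
    rw [keyNW, h2]
    nlinarith [mul_lt_mul_of_pos_left hL h3]
  have h5 : r / 2 * ((t ^ 2 + t + 1) * (t - 1) ^ 2) <
      (t ^ 2 + 1) * ((t + 1) * s - 2 * r * t) :=
    lt_of_mul_lt_mul_right h4 hW.le
  rw [g, lt_div_iff₀ hD]
  linarith

lemma Fden_pos {x : ℝ} (hx : 0 ≤ x) :
    0 < (1 + x + x ^ 2) * ((1 + x) * Real.sqrt (1 + x ^ 2) + 2 * Real.sqrt 2 * x) := by
  have h1 : 0 < Real.sqrt (1 + x ^ 2) := Real.sqrt_pos.mpr (by positivity)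
  have h2 := hr_pos
  have : 0 < (1 + x) * Real.sqrt (1 + x ^ 2) + 2 * Real.sqrt 2 * x := by nlinarith
  have h3 : (0:ℝ) < 1 + x + x ^ 2 := by positivity
  exact mul_pos h3 this

lemma contF {x : ℝ}
    (hden : (1 + x + x ^ 2) * ((1 + x) * Real.sqrt (1 + x ^ 2) + 2 * Real.sqrt 2 * x) ≠ 0) :
    ContinuousAt F x := by
  apply ContinuousAt.div
  · fun_prop
  · fun_prop
  · exact hden

lemma g_eq_F {t : ℝ} (ht : 1 < t) : g t = F t⁻¹ := by
  have ht0 : (0 : ℝ) < t := by linarith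
  have hD := D_pos ht
  have hW := W_pos ht
  have hx : Real.sqrt (1 + (t⁻¹) ^ 2) = Real.sqrt (t ^ 2 + 1) * t⁻¹ := by
    rw [show 1 + (t⁻¹) ^ 2 = (t ^ 2 + 1) * (t⁻¹) ^ 2 by field_simp,
      Real.sqrt_mul (by positivity), Real.sqrt_sq (by positivity)]
  have hh : g t = (t ^ 2 + 1) * (t ^ 2 + 4 * t + 1) /
      ((t ^ 2 + t + 1) * ((t + 1) * Real.sqrt (t ^ 2 + 1) + 2 * Real.sqrt 2 * t)) := by
    rw [g, div_eq_div_iff hD.ne' (by positivity)]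
    linear_combination (t ^ 2 + t + 1) * keyNW t
  rw [hh, F, hx]
  have hden2 : 0 < (1 + t⁻¹ + (t⁻¹) ^ 2) *
      ((1 + t⁻¹) * (Real.sqrt (t ^ 2 + 1) * t⁻¹) + 2 * Real.sqrt 2 * t⁻¹) := by
    have h1 := hs_pos t
    have h2 := hr_pos
    have h3 : (0:ℝ) < t⁻¹ := by positivity
    have h4 : (0:ℝ) < 1 + t⁻¹ + (t⁻¹) ^ 2 := by positivity
    have h5 : 0 < (1 + t⁻¹) * (Real.sqrt (t ^ 2 + 1) * t⁻¹) + 2 * Real.sqrt 2 * t⁻¹ := by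
      positivity
    exact mul_pos h4 h5
  rw [div_eq_div_iff (by positivity) hden2.ne']
  field_simp

lemma F_one : F 1 = Real.sqrt 2 / 2 := by
  have h1 : Real.sqrt (1 + (1:ℝ) ^ 2) = Real.sqrt 2 := by norm_num
  rw [F, h1]
  rw [div_eq_div_iff (by positivity) (by norm_num)]
  linear_combination (-12) * hr_sq

lemma F_zero : F 0 = 1 := by
  have h1 : Real.sqrt (1 + (0:ℝ) ^ 2) = 1 := by norm_num
  rw [F, h1]
  norm_num

lemma tendsto_one : Filter.Tendsto g (nhdsWithin 1 (Set.Ioi (1 : ℝ)))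
    (nhds (Real.sqrt 2 / 2)) := by
  have hF : ContinuousAt F 1 := by
    apply contF
    have h1 : Real.sqrt (1 + (1:ℝ) ^ 2) = Real.sqrt 2 := by norm_num
    rw [h1]
    have := hr_pos
    positivity
  have hinv : Filter.Tendsto (fun t : ℝ => t⁻¹) (nhdsWithin 1 (Set.Ioi (1 : ℝ))) (nhds 1) := by
    have : ContinuousAt (fun t : ℝ => t⁻¹) 1 := continuousAt_inv₀ one_ne_zero
    simpa using this.continuousWithinAt.tendsto
  have hmain : Filter.Tendsto (fun t : ℝ => F t⁻¹) (nhdsWithin 1 (Set.Ioi (1 : ℝ)))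
      (nhds (Real.sqrt 2 / 2)) := by
    rw [← F_one]
    exact hF.tendsto.comp hinv
  apply hmain.congr'
  filter_upwards [self_mem_nhdsWithin] with t ht
  exact (g_eq_F ht).symm

lemma tendsto_top : Filter.Tendsto g Filter.atTop (nhds 1) := by
  have hF : ContinuousAt F 0 := by
    apply contF
    have h1 : Real.sqrt (1 + (0:ℝ) ^ 2) = 1 := by norm_num
    rw [h1]; norm_num
  have hmain : Filter.Tendsto (fun t : ℝ => F t⁻¹) Filter.atTop (nhds 1) := by
    rw [← F_zero]
    exact hF.tendsto.comp tendsto_inv_atTop_zero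
  apply hmain.congr'
  filter_upwards [eventually_gt_atTop 1] with t ht
  exact (g_eq_F ht).symm

lemma g_cont : ContinuousOn g (Set.Ioi (1 : ℝ)) := by
  apply ContinuousOn.div
  · fun_prop
  · fun_prop
  · exact fun t ht => (D_pos ht).ne'

theorem stmt_14 :
    (∀ t ∈ Set.Ioi (1 : ℝ), Real.sqrt 2 / 2 < g t ∧ g t < 1) ∧
    Filter.Tendsto g (nhdsWithin 1 (Set.Ioi (1 : ℝ))) (nhds (Real.sqrt 2 / 2)) ∧
    Filter.Tendsto g Filter.atTop (nhds 1) ∧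
    g '' Set.Ioi (1 : ℝ) = Set.Ioo (Real.sqrt 2 / 2) 1 := by
  refine ⟨fun t ht => ⟨g_gt ht, g_lt_one ht⟩, tendsto_one, tendsto_top, ?_⟩
  apply Set.eq_of_subset_of_subset
  · rintro y ⟨t, ht, rfl⟩
    exact ⟨g_gt ht, g_lt_one ht⟩
  · rintro y ⟨hy1, hy2⟩
    have h1 : ∀ᶠ t in nhdsWithin 1 (Set.Ioi (1 : ℝ)), g t < y :=
      tendsto_one.eventually_lt_const hy1
    have : NeBot (nhdsWithin (1:ℝ) (Set.Ioi (1 : ℝ))) := inferInstance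
    obtain ⟨a, hay, ha⟩ := (h1.and self_mem_nhdsWithin).exists
    have h2 : ∀ᶠ t in Filter.atTop, y < g t :=
      tendsto_top.eventually_const_lt hy2
    obtain ⟨b, hyb, hab⟩ := (h2.and (eventually_gt_atTop a)).exists
    have hIcc : Set.Icc a b ⊆ Set.Ioi (1 : ℝ) := fun x hx => lt_of_lt_of_le ha hx.1
    have hival := intermediate_value_Icc hab.le (g_cont.mono hIcc)
    obtain ⟨c, hc, hcy⟩ := hival ⟨hay.le, hyb.le⟩
    exact ⟨c, hIcc hc, hcy⟩
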